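/- arXiv:1901.02841 — 4 statements merged into one kernel-verified Lean document; each statement's English description precedes it below -/
import Mathlib

section
/- Let a > 0, α ∈ ℝ, β ∈ {1,2}. Suppose (μ_t)_{t≥0} and (ν_t)_{t≥0} are two families of Borel probability measures on ℝ, each supported in (0,∞), each with all moments finite and continuous as functions of t, with μ_0 = ν_0 = δ_a, and each satisfying for every f ∈ C²(ℝ) of polynomial growth and every t ≥ 0 the geometric-Brownian-motion limiting equation ⟨μ_t,f⟩ = f(a) + α ∫_0^t ∫_ℝ x f'(x) μ_s(dx) ds + β ∫_0^t ∬_{ℝ²} Δf(x,y)·xy μ_s(dx)μ_s(dy) ds (and likewise for ν). Then μ_t = ν_t for every t ≥ 0. -/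
open MeasureTheory Filter Set

/-- The difference quotient of the derivative: `Δf(x,y) = (f'(x)-f'(y))/(x-y)` for `x ≠ y`,
and `Δf(x,x) = f''(x)`. -/
noncomputable def deltaF (f : ℝ → ℝ) (x y : ℝ) : ℝ :=
  if x = y then deriv (deriv f) x else (deriv f x - deriv f y) / (x - y)

/-- A `C²` function of polynomial growth (together with its first two derivatives). -/
def PolyGrowthC2 (f : ℝ → ℝ) : Prop :=
  ContDiff ℝ 2 f ∧ ∃ C > (0:ℝ), ∃ m : ℕ, ∀ x : ℝ,
    |f x| + |deriv f x| + |deriv (deriv f) x| ≤ C * (1 + |x| ^ m)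

open Real

lemma deltaF_pow (k : ℕ) (x y : ℝ) :
    deltaF (fun x => x ^ (k+1)) x y * (x * y)
      = (k+1 : ℝ) * ∑ j ∈ Finset.range k, x ^ (j+1) * y ^ (k-j) := by
  have hd : deriv (fun x : ℝ => x ^ (k+1)) = fun x => ((k:ℝ)+1) * x ^ k := by
    funext x; simp [deriv_pow]
  rcases Nat.eq_zero_or_pos k with rfl | hk
  · rcases eq_or_ne x y with rfl | hxy
    · simp [deltaF, hd]
    · simp [deltaF, if_neg hxy, hd]
  rcases eq_or_ne x y with rfl | hxy
  · have hsum : ∑ j ∈ Finset.range k, x ^ (j+1) * x ^ (k-j) = (k:ℝ) * x ^ (k+1) := by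
      have : ∀ j ∈ Finset.range k, x ^ (j+1) * x ^ (k-j) = x ^ (k+1) := by
        intro j hj
        rw [← pow_add]
        congr 1
        have := Finset.mem_range.mp hj
        omega
      rw [Finset.sum_congr rfl this, Finset.sum_const, Finset.card_range, nsmul_eq_mul]
    simp only [deltaF, if_pos rfl, hd, hsum]
    have hdd : deriv (fun x : ℝ => ((k:ℝ)+1) * x ^ k) x = ((k:ℝ)+1) * ((k:ℝ) * x ^ (k-1)) := by
      simp [deriv_const_mul, deriv_pow]
    rw [hdd]
    have hx : x ^ (k-1) * (x * x) = x ^ (k+1) := by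
      rw [← sq, ← pow_add]
      congr 1
      omega
    calc ((k:ℝ)+1) * ((k:ℝ) * x ^ (k-1)) * (x * x)
        = ((k:ℝ)+1) * (k:ℝ) * (x ^ (k-1) * (x * x)) := by ring
      _ = ((k:ℝ)+1) * ((k:ℝ) * x ^ (k+1)) := by rw [hx]; ring
  · simp only [deltaF, if_neg hxy, hd]
    have hsub : x - y ≠ 0 := sub_ne_zero.mpr hxy
    have geom : (∑ j ∈ Finset.range k, x ^ j * y ^ (k - 1 - j)) * (x - y) = x ^ k - y ^ k :=
      geom_sum₂_mul x y k
    have key : ((k:ℝ)+1) * x ^ k - ((k:ℝ)+1) * y ^ k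
        = ((k:ℝ)+1) * (∑ j ∈ Finset.range k, x ^ j * y ^ (k - 1 - j)) * (x - y) := by
      rw [mul_assoc, geom]; ring
    have expand : ((k:ℝ)+1) * ∑ j ∈ Finset.range k, x ^ (j+1) * y ^ (k-j)
        = (((k:ℝ)+1) * ∑ j ∈ Finset.range k, x ^ j * y ^ (k-1-j)) * (x * y) := by
      rw [Finset.mul_sum, Finset.mul_sum, Finset.sum_mul]
      refine Finset.sum_congr rfl fun j hj => ?_
      have hjk := Finset.mem_range.mp hj
      have h1 : x * x ^ j = x ^ (j+1) := by rw [← pow_succ']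
      have h2 : y ^ (k-1-j) * y = y ^ (k-j) := by
        rw [← pow_succ]
        congr 1
        omega
      calc ((k:ℝ)+1) * (x ^ (j+1) * y ^ (k-j))
          = ((k:ℝ)+1) * ((x * x ^ j) * (y ^ (k-1-j) * y)) := by rw [h1, h2]
        _ = ((k:ℝ)+1) * (x ^ j * y ^ (k-1-j)) * (x * y) := by ring
    rw [key, mul_div_cancel_right₀ _ hsub, expand]


lemma abs_pow_le (x : ℝ) (j n : ℕ) (h : j ≤ n) : |x| ^ j ≤ 1 + |x| ^ n := by
  rcases le_total |x| 1 with hx | hx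
  · have : |x| ^ j ≤ 1 := pow_le_one₀ (abs_nonneg x) hx
    nlinarith [pow_nonneg (abs_nonneg x) n]
  · have : |x| ^ j ≤ |x| ^ n := pow_le_pow_right₀ hx h
    linarith
lemma polyGrowth_pow (n : ℕ) : PolyGrowthC2 (fun x => x ^ n) := by
  constructor
  · exact contDiff_id.pow n
  · refine ⟨1 + n + n^2, by positivity, n, fun x => ?_⟩
    have hd : deriv (fun x : ℝ => x ^ n) = fun x => (n:ℝ) * x ^ (n-1) := by
      funext x; simp [deriv_pow]
    have hdd : deriv (deriv (fun x : ℝ => x ^ n)) = fun x => (n:ℝ) * ((n-1:ℕ) * x ^ (n-1-1)) := by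
      rw [hd]; funext x; simp [deriv_const_mul, deriv_pow]
    rw [hdd, hd]; simp only []
    have h0 : |x ^ n| ≤ 1 + |x| ^ n := by
      rw [abs_pow]; exact abs_pow_le x n n le_rfl
    have h1 : |(n:ℝ) * x ^ (n-1)| ≤ (n:ℝ) * (1 + |x| ^ n) := by
      rw [abs_mul, abs_pow, Nat.abs_cast]
      exact mul_le_mul_of_nonneg_left (abs_pow_le x (n-1) n (Nat.sub_le n 1)) (Nat.cast_nonneg n)
    have h2 : |(n:ℝ) * ((n-1:ℕ) * x ^ (n-1-1))| ≤ (n:ℝ)^2 * (1 + |x| ^ n) := by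
      rw [abs_mul, abs_mul, abs_pow, Nat.abs_cast, Nat.abs_cast]
      have : ((n-1:ℕ):ℝ) * |x| ^ (n-1-1) ≤ (n:ℝ) * (1 + |x| ^ n) := by
        have := abs_pow_le x (n-1-1) n (by omega)
        have hc : ((n-1:ℕ):ℝ) ≤ (n:ℝ) := by exact_mod_cast Nat.sub_le n 1
        nlinarith [pow_nonneg (abs_nonneg x) (n-1-1), pow_nonneg (abs_nonneg x) n, Nat.cast_nonneg (α := ℝ) n]
      calc (n:ℝ) * (((n-1:ℕ):ℝ) * |x| ^ (n-1-1)) ≤ (n:ℝ) * ((n:ℝ) * (1+|x|^n)) :=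
            mul_le_mul_of_nonneg_left this (Nat.cast_nonneg n)
        _ = (n:ℝ)^2 * (1+|x|^n) := by ring
    have hpos : (0:ℝ) ≤ 1 + |x| ^ n := by positivity
    have := add_le_add (add_le_add h0 h1) h2
    calc |x ^ n| + |(n:ℝ) * x ^ (n-1)| + |(n:ℝ) * ((n-1:ℕ) * x ^ (n-1-1))|
        ≤ (1 + |x|^n) + (n:ℝ)*(1+|x|^n) + (n:ℝ)^2*(1+|x|^n) := this
      _ = (1 + (n:ℝ) + (n:ℝ)^2) * (1 + |x|^n) := by ring
      _ = ((1:ℝ) + n + n^2) * (1 + |x|^n) := by norm_num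


lemma moment_volterra (a α β : ℝ) (μ : ℝ → Measure ℝ)
    (hμint : ∀ t : ℝ, 0 ≤ t → ∀ k : ℕ, Integrable (fun x => x ^ k) (μ t))
    (hμcont : ∀ k : ℕ, ContinuousOn (fun t : ℝ => ∫ x, x ^ k ∂(μ t)) (Ici 0))
    (heqμ : ∀ f : ℝ → ℝ, PolyGrowthC2 f → ∀ t : ℝ, 0 ≤ t →
      ∫ x, f x ∂(μ t) = f a
        + α * (∫ s in (0:ℝ)..t, ∫ x, x * deriv f x ∂(μ s))
        + β * ∫ s in (0:ℝ)..t, ∫ x, ∫ y, deltaF f x y * (x * y) ∂(μ s) ∂(μ s))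
    (k : ℕ) (t : ℝ) (ht : 0 ≤ t) :
    ∫ x, x ^ (k+1) ∂(μ t) = a ^ (k+1)
      + α * (k+1) * (∫ s in (0:ℝ)..t, ∫ x, x ^ (k+1) ∂(μ s))
      + β * (k+1) * ∑ j ∈ Finset.range k,
          ∫ s in (0:ℝ)..t, (∫ x, x ^ (j+1) ∂(μ s)) * (∫ x, x ^ (k-j) ∂(μ s)) := by
  have hd : deriv (fun x : ℝ => x ^ (k+1)) = fun x => ((k:ℝ)+1) * x ^ k := by
    funext x; simp [deriv_pow]
  have h := heqμ (fun x => x ^ (k+1)) (polyGrowth_pow (k+1)) t ht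
  -- first term
  have hfirst : ∀ s : ℝ, (∫ x, x * deriv (fun x : ℝ => x ^ (k+1)) x ∂(μ s))
      = ((k:ℝ)+1) * ∫ x, x ^ (k+1) ∂(μ s) := by
    intro s
    rw [hd]
    have : (fun x : ℝ => x * (((k:ℝ)+1) * x ^ k)) = fun x : ℝ => ((k:ℝ)+1) * x ^ (k+1) := by
      funext x; rw [pow_succ']; ring
    rw [show (∫ x, x * (((k:ℝ)+1) * x ^ k) ∂(μ s)) = ∫ x, ((k:ℝ)+1) * x ^ (k+1) ∂(μ s) from by rw [this]]
    exact MeasureTheory.integral_const_mul _ _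
  -- second term integrand for s ≥ 0
  have hsecond : ∀ s : ℝ, 0 ≤ s →
      (∫ x, ∫ y, deltaF (fun x : ℝ => x ^ (k+1)) x y * (x * y) ∂(μ s) ∂(μ s))
      = ((k:ℝ)+1) * ∑ j ∈ Finset.range k,
          (∫ x, x ^ (j+1) ∂(μ s)) * (∫ x, x ^ (k-j) ∂(μ s)) := by
    intro s hs
    have hinner : ∀ x : ℝ, (∫ y, deltaF (fun x : ℝ => x ^ (k+1)) x y * (x * y) ∂(μ s))
        = ((k:ℝ)+1) * ∑ j ∈ Finset.range k, x ^ (j+1) * ∫ y, y ^ (k-j) ∂(μ s) := by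
      intro x
      have h1 : (fun y => deltaF (fun x : ℝ => x ^ (k+1)) x y * (x * y))
          = fun y => ((k:ℝ)+1) * ∑ j ∈ Finset.range k, x ^ (j+1) * y ^ (k-j) := by
        funext y; exact_mod_cast deltaF_pow k x y
      rw [h1, MeasureTheory.integral_const_mul]
      congr 1
      rw [integral_finset_sum _ (fun j hj => ((hμint s hs (k-j)).const_mul _))]
      exact Finset.sum_congr rfl fun j hj => MeasureTheory.integral_const_mul _ _
    rw [show (∫ x, ∫ y, deltaF (fun x : ℝ => x ^ (k+1)) x y * (x * y) ∂(μ s) ∂(μ s))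
        = ∫ x, ((k:ℝ)+1) * ∑ j ∈ Finset.range k, x ^ (j+1) * ∫ y, y ^ (k-j) ∂(μ s) ∂(μ s)
        from integral_congr_ae (Filter.Eventually.of_forall hinner)]
    rw [MeasureTheory.integral_const_mul]
    congr 1
    rw [integral_finset_sum _ (fun j hj => ((hμint s hs (j+1)).mul_const _))]
    exact Finset.sum_congr rfl fun j hj => MeasureTheory.integral_mul_const _ _
  rw [h]
  have e1 : (∫ s in (0:ℝ)..t, ∫ x, x * deriv (fun x : ℝ => x ^ (k+1)) x ∂(μ s))
      = ((k:ℝ)+1) * ∫ s in (0:ℝ)..t, ∫ x, x ^ (k+1) ∂(μ s) := by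
    rw [show (fun s => ∫ x, x * deriv (fun x : ℝ => x ^ (k+1)) x ∂(μ s))
        = fun s => ((k:ℝ)+1) * ∫ x, x ^ (k+1) ∂(μ s) from funext hfirst]
    exact intervalIntegral.integral_const_mul _ _
  have e2 : (∫ s in (0:ℝ)..t, ∫ x, ∫ y, deltaF (fun x : ℝ => x ^ (k+1)) x y * (x * y) ∂(μ s) ∂(μ s))
      = ((k:ℝ)+1) * ∑ j ∈ Finset.range k,
          ∫ s in (0:ℝ)..t, (∫ x, x ^ (j+1) ∂(μ s)) * (∫ x, x ^ (k-j) ∂(μ s)) := by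
    have hcongr : ∀ s ∈ Set.uIcc (0:ℝ) t,
        (∫ x, ∫ y, deltaF (fun x : ℝ => x ^ (k+1)) x y * (x * y) ∂(μ s) ∂(μ s))
        = ((k:ℝ)+1) * ∑ j ∈ Finset.range k,
            (∫ x, x ^ (j+1) ∂(μ s)) * (∫ x, x ^ (k-j) ∂(μ s)) := by
      intro s hs
      rw [Set.uIcc_of_le ht] at hs
      exact hsecond s hs.1
    rw [intervalIntegral.integral_congr hcongr, intervalIntegral.integral_const_mul]
    congr 1
    rw [intervalIntegral.integral_finset_sum]
    intro j hj
    have hcont : ContinuousOn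
        (fun s : ℝ => (∫ x, x ^ (j+1) ∂(μ s)) * (∫ x, x ^ (k-j) ∂(μ s))) (Set.uIcc 0 t) := by
      rw [Set.uIcc_of_le ht]
      exact ((hμcont (j+1)).mono (Icc_subset_Ici_self)).mul ((hμcont (k-j)).mono (Icc_subset_Ici_self))
    exact hcont.intervalIntegrable
  rw [e1, e2]
  push_cast
  ring



/-- Gronwall-type: continuous `u` on `[0,∞)` with `u t = c * ∫_0^t u` is zero. -/
lemma gronwall_zero (u : ℝ → ℝ) (c : ℝ) (hu : ContinuousOn u (Ici 0))
    (h : ∀ t : ℝ, 0 ≤ t → u t = c * ∫ s in (0:ℝ)..t, u s) :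
    ∀ t : ℝ, 0 ≤ t → u t = 0 := by
  intro T hT
  -- bound on [0,T]
  obtain ⟨M, hM⟩ : ∃ M, ∀ t ∈ Icc (0:ℝ) T, |u t| ≤ M := by
    obtain ⟨M, hM⟩ := (isCompact_Icc (a := (0:ℝ)) (b := T)).exists_bound_of_continuousOn
      (hu.mono (fun x hx => hx.1))
    exact ⟨M, fun t ht => by simpa using hM t ht⟩
  have hM0 : 0 ≤ M := le_trans (abs_nonneg _) (hM 0 ⟨le_refl _, hT⟩)
  have hiter : ∀ n : ℕ, ∀ t ∈ Icc (0:ℝ) T, |u t| ≤ M * (|c| * t) ^ n / n.factorial := by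
    intro n
    induction n with
    | zero => intro t ht; simpa using hM t ht
    | succ n ih =>
      intro t ht
      have hint_u : IntervalIntegrable u volume 0 t :=
        (hu.mono (fun x hx => ?_)).intervalIntegrable
      swap
      · rw [uIcc_of_le ht.1] at hx; exact hx.1
      have h1 : |u t| ≤ |c| * |∫ s in (0:ℝ)..t, u s| := by
        rw [h t ht.1, abs_mul]
      have h2 : |∫ s in (0:ℝ)..t, u s| ≤ ∫ s in (0:ℝ)..t, |u s| := by
        simpa using intervalIntegral.norm_integral_le_integral_norm (f := u) (μ := volume) ht.1
      have h3 : (∫ s in (0:ℝ)..t, |u s|) ≤ ∫ s in (0:ℝ)..t, M * (|c| * s) ^ n / n.factorial := by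
        apply intervalIntegral.integral_mono_on ht.1 hint_u.abs
        · apply Continuous.intervalIntegrable; continuity
        · intro s hs
          exact ih s ⟨hs.1, le_trans hs.2 ht.2⟩
      have h4 : (∫ s in (0:ℝ)..t, M * (|c| * s) ^ n / n.factorial)
          = M * |c| ^ n / n.factorial * (t ^ (n+1) / (n+1)) := by
        have : (fun s : ℝ => M * (|c| * s) ^ n / n.factorial)
            = fun s : ℝ => (M * |c| ^ n / n.factorial) * s ^ n := by
          funext s; rw [mul_pow]; ring
        rw [this, intervalIntegral.integral_const_mul, integral_pow]
        norm_num
      have habs : 0 ≤ ∫ s in (0:ℝ)..t, |u s| :=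
        intervalIntegral.integral_nonneg ht.1 (fun s _ => abs_nonneg _)
      calc |u t| ≤ |c| * |∫ s in (0:ℝ)..t, u s| := h1
        _ ≤ |c| * (M * |c| ^ n / n.factorial * (t ^ (n+1) / (n+1))) := by
            rw [← h4]
            exact mul_le_mul_of_nonneg_left (le_trans h2 h3) (abs_nonneg c)
        _ = M * (|c| * t) ^ (n+1) / (n+1).factorial := by
            rw [Nat.factorial_succ, mul_pow]
            push_cast
            field_simp
            ring
  have hlim : Tendsto (fun n : ℕ => M * (|c| * T) ^ n / n.factorial) atTop (nhds 0) := by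
    have := FloorSemiring.tendsto_pow_div_factorial_atTop (K := ℝ) (|c| * T)
    have := this.const_mul M
    simpa [mul_div_assoc] using this
  have : |u T| ≤ 0 := ge_of_tendsto hlim (Filter.Eventually.of_forall
      (fun n => hiter n T ⟨hT, le_refl _⟩))
  exact abs_eq_zero.mp (le_antisymm this (abs_nonneg _))



lemma integral_exp_mul_self (ρ t : ℝ) (hρ : ρ ≠ 0) :
    ∫ s in (0:ℝ)..t, exp (ρ*s) = (exp (ρ*t) - 1)/ρ := by
  rw [show (fun s : ℝ => exp (ρ*s)) = fun s : ℝ => exp (ρ*s) from rfl,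
    intervalIntegral.integral_comp_mul_left (fun x => exp x) hρ]
  simp [integral_exp, smul_eq_mul]
  ring

lemma gronwall_bound (u : ℝ → ℝ) (A L D ρ : ℝ) (hu : ContinuousOn u (Ici 0))
    (hA : 0 ≤ A) (hD : 0 ≤ D) (hL : 0 ≤ L) (hLρ : L < ρ)
    (h : ∀ t : ℝ, 0 ≤ t → u t ≤ A + (D/ρ) * (exp (ρ*t) - 1) + L * ∫ s in (0:ℝ)..t, u s) :
    ∀ t : ℝ, 0 ≤ t → u t ≤ (A + D/ρ) * (ρ/(ρ-L)) * exp (ρ*t) := by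
  have hρ0 : 0 < ρ := lt_of_le_of_lt hL hLρ
  set q : ℝ := L / ρ with hq
  have hq0 : 0 ≤ q := div_nonneg hL hρ0.le
  have hq1 : q < 1 := (div_lt_one hρ0).mpr hLρ
  set A' : ℝ := A + D/ρ with hA'
  have hA'0 : 0 ≤ A' := by positivity
  intro T hT
  obtain ⟨M, hM⟩ : ∃ M, ∀ t ∈ Icc (0:ℝ) T, |u t| ≤ M := by
    obtain ⟨M, hM⟩ := (isCompact_Icc (a := (0:ℝ)) (b := T)).exists_bound_of_continuousOn
      (hu.mono (fun x hx => hx.1))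
    exact ⟨M, fun t ht => by simpa using hM t ht⟩
  have hM0 : 0 ≤ M := le_trans (abs_nonneg _) (hM 0 ⟨le_refl _, hT⟩)
  have key : ∀ n : ℕ, ∀ t ∈ Icc (0:ℝ) T,
      u t ≤ A' * exp (ρ*t) * (∑ i ∈ Finset.range n, q ^ i) + M * (L*t) ^ n / n.factorial := by
    intro n
    induction n with
    | zero =>
      intro t ht
      simpa using le_trans (le_abs_self _) (hM t ht)
    | succ n ih =>
      intro t ht
      have hint_u : IntervalIntegrable u volume 0 t := by
        apply (hu.mono (fun x hx => ?_)).intervalIntegrable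
        rw [uIcc_of_le ht.1] at hx; exact hx.1
      have hcont_rhs : Continuous (fun s : ℝ =>
          A' * exp (ρ*s) * (∑ i ∈ Finset.range n, q ^ i) + M * (L*s) ^ n / n.factorial) := by
        continuity
      have h3 : (∫ s in (0:ℝ)..t, u s)
          ≤ ∫ s in (0:ℝ)..t, (A' * exp (ρ*s) * (∑ i ∈ Finset.range n, q ^ i)
              + M * (L*s) ^ n / n.factorial) := by
        apply intervalIntegral.integral_mono_on ht.1 hint_u (hcont_rhs.intervalIntegrable _ _)
        intro s hs
        exact ih s ⟨hs.1, le_trans hs.2 ht.2⟩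
      have h4 : (∫ s in (0:ℝ)..t, (A' * exp (ρ*s) * (∑ i ∈ Finset.range n, q ^ i)
              + M * (L*s) ^ n / n.factorial))
          = A' * (∑ i ∈ Finset.range n, q ^ i) * ((exp (ρ*t) - 1)/ρ)
            + M * L ^ n / n.factorial * (t ^ (n+1) / (n+1)) := by
        rw [intervalIntegral.integral_add]
        · congr 1
          · rw [show (fun s : ℝ => A' * exp (ρ*s) * (∑ i ∈ Finset.range n, q ^ i))
                = fun s : ℝ => (A' * (∑ i ∈ Finset.range n, q ^ i)) * exp (ρ*s) from by
                  funext s; ring]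
            rw [intervalIntegral.integral_const_mul, integral_exp_mul_self ρ t hρ0.ne']
          · rw [show (fun s : ℝ => M * (L*s) ^ n / n.factorial)
                = fun s : ℝ => (M * L ^ n / n.factorial) * s ^ n from by
                  funext s; rw [mul_pow]; ring]
            rw [intervalIntegral.integral_const_mul, integral_pow]
            norm_num
        · exact Continuous.intervalIntegrable (by fun_prop) _ _
        · exact Continuous.intervalIntegrable (by fun_prop) _ _
      have hgeom_nn : 0 ≤ ∑ i ∈ Finset.range n, q ^ i :=
        Finset.sum_nonneg fun i _ => pow_nonneg hq0 i
      calc u t ≤ A + (D/ρ) * (exp (ρ*t) - 1) + L * ∫ s in (0:ℝ)..t, u s := h t ht.1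
        _ ≤ A' * exp (ρ*t) + L * (A' * (∑ i ∈ Finset.range n, q ^ i) * ((exp (ρ*t) - 1)/ρ)
            + M * L ^ n / n.factorial * (t ^ (n+1) / (n+1))) := by
          have e1 : A + (D/ρ) * (exp (ρ*t) - 1) ≤ A' * exp (ρ*t) := by
            have h1 : (1:ℝ) ≤ exp (ρ*t) := by
              rw [← exp_zero]
              exact exp_le_exp.mpr (mul_nonneg hρ0.le ht.1)
            have : (D/ρ) * (exp (ρ*t) - 1) ≤ (D/ρ) * exp (ρ*t) := by
              apply mul_le_mul_of_nonneg_left (by linarith) (div_nonneg hD hρ0.le)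
            nlinarith [mul_le_mul_of_nonneg_left h1 hA]
          have e2 : L * (∫ s in (0:ℝ)..t, u s) ≤ L * (A' * (∑ i ∈ Finset.range n, q ^ i) * ((exp (ρ*t) - 1)/ρ)
            + M * L ^ n / n.factorial * (t ^ (n+1) / (n+1))) := by
            rw [← h4]
            exact mul_le_mul_of_nonneg_left h3 hL
          linarith
        _ ≤ A' * exp (ρ*t) * (∑ i ∈ Finset.range (n+1), q ^ i) + M * (L*t) ^ (n+1) / (n+1).factorial := by
          have hh : L * (A' * (∑ i ∈ Finset.range n, q ^ i) * ((exp (ρ*t) - 1)/ρ))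
              ≤ A' * exp (ρ*t) * (q * ∑ i ∈ Finset.range n, q ^ i) := by
            have hb : (exp (ρ*t) - 1)/ρ ≤ exp (ρ*t)/ρ :=
              (div_le_div_iff_of_pos_right hρ0).mpr (by linarith [exp_pos (ρ*t)])
            calc L * (A' * (∑ i ∈ Finset.range n, q ^ i) * ((exp (ρ*t) - 1)/ρ))
                ≤ L * (A' * (∑ i ∈ Finset.range n, q ^ i) * (exp (ρ*t)/ρ)) := by
                  apply mul_le_mul_of_nonneg_left ?_ hL
                  exact mul_le_mul_of_nonneg_left hb (by positivity)
              _ = A' * exp (ρ*t) * (q * ∑ i ∈ Finset.range n, q ^ i) := by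
                  rw [hq]; field_simp
          have hrem : L * (M * L ^ n / n.factorial * (t ^ (n+1) / (n+1)))
              = M * (L*t) ^ (n+1) / (n+1).factorial := by
            rw [Nat.factorial_succ, mul_pow]
            push_cast
            field_simp
            ring
          rw [geom_sum_succ]
          nlinarith [hh, hrem]
  -- pass to the limit
  have hlim1 : Tendsto (fun n : ℕ => A' * exp (ρ*T) * (∑ i ∈ Finset.range n, q ^ i)
      + M * (L*T) ^ n / n.factorial) atTop (nhds (A' * exp (ρ*T) * (1-q)⁻¹ + 0)) := by
    apply Tendsto.add
    · exact (hasSum_geometric_of_lt_one hq0 hq1).tendsto_sum_nat.const_mul _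
    · have := FloorSemiring.tendsto_pow_div_factorial_atTop (K := ℝ) (L * T)
      have := this.const_mul M
      simpa [mul_div_assoc] using this
  have hfin : u T ≤ A' * exp (ρ*T) * (1-q)⁻¹ + 0 :=
    ge_of_tendsto hlim1 (Filter.Eventually.of_forall (fun n => key n T ⟨hT, le_refl _⟩))
  have : A' * exp (ρ*T) * (1-q)⁻¹ + 0 = (A + D/ρ) * (ρ/(ρ-L)) * exp (ρ*T) := by
    rw [hq, add_zero]
    have h1 : (1 - L/ρ) = (ρ - L)/ρ := by field_simp
    rw [h1, inv_div]
    ring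
  linarith [hfin, this.le]



lemma sum_inv_sq_le (m : ℕ) : ∑ i ∈ Finset.range m, (1:ℝ)/((i:ℝ)+1)^2 ≤ 2 := by
  induction m with
  | zero => norm_num
  | succ m ih =>
    rcases Nat.eq_zero_or_pos m with rfl | hm
    · norm_num
    have key : ∀ m : ℕ, 1 ≤ m → ∑ i ∈ Finset.range m, (1:ℝ)/((i:ℝ)+1)^2 ≤ 2 - 1/(m:ℝ) := by
      intro m hm
      induction m with
      | zero => omega
      | succ m ih2 =>
        rcases Nat.eq_zero_or_pos m with rfl | hm'
        · norm_num
        have h2 := ih2 hm'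
        rw [Finset.sum_range_succ]
        have hm1 : (1:ℝ) ≤ (m:ℝ) := by exact_mod_cast hm'
        have : (1:ℝ)/((m:ℝ)+1)^2 ≤ 1/(m:ℝ) - 1/((m:ℝ)+1) := by
          rw [div_sub_div _ _ (by positivity) (by positivity)]
          rw [div_le_div_iff₀ (by positivity) (by positivity)]
          ring_nf
          nlinarith
        push_cast
        linarith
    have := key (m+1) (by omega)
    have : (0:ℝ) < ((m:ℝ)+1) := by positivity
    have h3 := key (m+1) (by omega)
    push_cast at h3
    have : (1:ℝ)/((m:ℝ)+1) ≥ 0 := by positivity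
    linarith

lemma aux_pt (x y : ℝ) (hx : 1 ≤ x) (hy : 1 ≤ y) :
    (1:ℝ)/(x^2*y^2) ≤ 4/(x+y)^2 * (1/x^2 + 1/y^2) := by
  have hx0 : (0:ℝ) < x := by linarith
  have hy0 : (0:ℝ) < y := by linarith
  have e : 4/(x+y)^2 * (1/x^2 + 1/y^2) = (4*(x^2+y^2))/((x+y)^2*(x^2*y^2)) := by
    field_simp
    ring
  rw [e, div_le_div_iff₀ (by positivity) (by positivity)]
  nlinarith [mul_nonneg (sq_nonneg (x-y)) (sq_nonneg (x*y))]

lemma conv_sum_bound (k : ℕ) :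
    ∑ j ∈ Finset.range k, (1:ℝ)/(((j:ℝ)+1)^2 * (((k-j:ℕ)):ℝ)^2) ≤ 16/((k:ℝ)+1)^2 := by
  have hpt : ∀ j ∈ Finset.range k, (1:ℝ)/(((j:ℝ)+1)^2 * (((k-j:ℕ)):ℝ)^2)
      ≤ 4/((k:ℝ)+1)^2 * (1/((j:ℝ)+1)^2 + 1/(((k-j:ℕ)):ℝ)^2) := by
    intro j hj
    have hjk := Finset.mem_range.mp hj
    have hl : (1:ℝ) ≤ ((k-j:ℕ):ℝ) := by
      have : 1 ≤ k - j := by omega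
      exact_mod_cast this
    have hi : (1:ℝ) ≤ (j:ℝ)+1 := by
      have := Nat.cast_nonneg (α:=ℝ) j; linarith
    have hsum : ((j:ℝ)+1) + ((k-j:ℕ):ℝ) = (k:ℝ)+1 := by
      have : (j+1) + (k-j) = k+1 := by omega
      exact_mod_cast this
    have := aux_pt ((j:ℝ)+1) ((k-j:ℕ):ℝ) hi hl
    rwa [hsum] at this
  calc ∑ j ∈ Finset.range k, (1:ℝ)/(((j:ℝ)+1)^2 * (((k-j:ℕ)):ℝ)^2)
      ≤ ∑ j ∈ Finset.range k, 4/((k:ℝ)+1)^2 * (1/((j:ℝ)+1)^2 + 1/(((k-j:ℕ)):ℝ)^2) :=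
        Finset.sum_le_sum hpt
    _ = 4/((k:ℝ)+1)^2 * ((∑ j ∈ Finset.range k, 1/((j:ℝ)+1)^2)
          + ∑ j ∈ Finset.range k, 1/(((k-j:ℕ)):ℝ)^2) := by
        rw [← Finset.mul_sum, Finset.sum_add_distrib]
    _ ≤ 16/((k:ℝ)+1)^2 := by
        have h1 := sum_inv_sq_le k
        have hpos : (0:ℝ) < ((k:ℝ)+1)^2 := by positivity
        have h2 : ∑ j ∈ Finset.range k, (1:ℝ)/(((k-j:ℕ)):ℝ)^2
            = ∑ j ∈ Finset.range k, (1:ℝ)/((j:ℝ)+1)^2 := by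
          rw [← Finset.sum_range_reflect]
          apply Finset.sum_congr rfl
          intro j hj
          have hjk := Finset.mem_range.mp hj
          congr 2
          have : k - (k - 1 - j) = j + 1 := by omega
          rw [this]
          push_cast
          ring
        rw [h2]
        calc 4/((k:ℝ)+1)^2 * ((∑ j ∈ Finset.range k, (1:ℝ)/((j:ℝ)+1)^2)
              + ∑ j ∈ Finset.range k, (1:ℝ)/((j:ℝ)+1)^2)
            ≤ 4/((k:ℝ)+1)^2 * 4 := by
              apply mul_le_mul_of_nonneg_left (by linarith) (by positivity)
          _ = 16/((k:ℝ)+1)^2 := by ring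

lemma four_sq_le_pow (n : ℕ) (hn : 1 ≤ n) : 4*((n:ℝ))^2 ≤ 4^n := by
  induction n with
  | zero => omega
  | succ n ih =>
    rcases Nat.eq_zero_or_pos n with rfl | hn'
    · norm_num
    have := ih hn'
    have hn1 : (1:ℝ) ≤ (n:ℝ) := by exact_mod_cast hn'
    push_cast
    rw [pow_succ (4:ℝ) n]
    nlinarith [this, hn1, sq_nonneg ((n:ℝ)-1)]


lemma mom_nonneg (P : Measure ℝ) (hP : P (Iic 0) = 0) (k : ℕ) : 0 ≤ ∫ x, x^k ∂P := by
  apply integral_nonneg_of_ae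
  have hae : ∀ᵐ x ∂P, 0 < x := by
    rw [ae_iff]
    convert hP using 2
    ext x
    simp [not_lt]
  filter_upwards [hae] with x hx
  positivity

section
variable (a α β : ℝ) (μ : ℝ → Measure ℝ)

lemma moment_bound (ha : 0 < a) (hb : 0 < β)
    (hμsupp : ∀ t : ℝ, 0 ≤ t → μ t (Iic 0) = 0)
    (hμint : ∀ t : ℝ, 0 ≤ t → ∀ k : ℕ, Integrable (fun x => x ^ k) (μ t))
    (hμcont : ∀ k : ℕ, ContinuousOn (fun t : ℝ => ∫ x, x ^ k ∂(μ t)) (Ici 0))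
    (hvolt : ∀ (k : ℕ) (t : ℝ), 0 ≤ t →
      ∫ x, x ^ (k+1) ∂(μ t) = a ^ (k+1)
        + α * (k+1) * (∫ s in (0:ℝ)..t, ∫ x, x ^ (k+1) ∂(μ s))
        + β * (k+1) * ∑ j ∈ Finset.range k,
            ∫ s in (0:ℝ)..t, (∫ x, x ^ (j+1) ∂(μ s)) * (∫ x, x ^ (k-j) ∂(μ s))) :
    ∀ n : ℕ, 1 ≤ n → ∀ t : ℝ, 0 ≤ t →
      ∫ x, x ^ n ∂(μ t) ≤ ((4*max a 1) ^ n / ((n:ℝ)^2))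
        * exp ((n:ℝ) * (|α| + (32*β + |α| + 1)) * t) := by
  set B : ℝ := 4 * max a 1 with hB
  set γ : ℝ := 32*β + |α| + 1 with hγ
  set c : ℝ := |α| + γ with hc
  have hB4 : a ≤ B/4 := by
    rw [hB]; have := le_max_left a 1; linarith
  have hB1 : 4 ≤ B := by
    rw [hB]; have := le_max_right a 1; linarith
  have hBpos : 0 < B := by linarith
  have hγpos : 0 < γ := by rw [hγ]; positivity
  have hcpos : 0 < c := by rw [hc]; positivity
  have hαγ : |α| ≤ γ := by rw [hγ]; have := abs_nonneg α; nlinarith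
  intro n
  induction n using Nat.strong_induction_on with
  | _ n ih =>
    intro hn t ht
    obtain ⟨k, rfl⟩ : ∃ k, n = k + 1 := ⟨n - 1, by omega⟩
    clear hn
    set u : ℝ → ℝ := fun t => ∫ x, x ^ (k+1) ∂(μ t) with hu
    have hk1pos : (0:ℝ) < (k:ℝ)+1 := by positivity
    set L : ℝ := |α| * ((k:ℝ)+1) with hL
    set ρ : ℝ := ((k:ℝ)+1) * c with hρ
    set D : ℝ := 16 * β * B^(k+1) / ((k:ℝ)+1) with hD
    have hρpos : 0 < ρ := by rw [hρ]; positivity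
    have hLρ : L < ρ := by
      rw [hL, hρ, hc]
      calc |α| * ((k:ℝ)+1) < (|α| + γ) * ((k:ℝ)+1) := by nlinarith
        _ = ((k:ℝ)+1) * (|α| + γ) := by ring
    have hunn : ∀ s : ℝ, 0 ≤ s → 0 ≤ u s := fun s hs => mom_nonneg _ (hμsupp s hs) _
    have hucont : ContinuousOn u (Ici 0) := hμcont (k+1)
    -- the Gronwall hypothesis
    have hgh : ∀ s : ℝ, 0 ≤ s → u s ≤ a^(k+1) + (D/ρ) * (exp (ρ*s) - 1)
        + L * ∫ r in (0:ℝ)..s, u r := by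
      intro s hs
      have hv := hvolt k s hs
      have hint_nonneg : 0 ≤ ∫ r in (0:ℝ)..s, u r :=
        intervalIntegral.integral_nonneg hs (fun r hr => hunn r hr.1)
      have part1 : α * ((k:ℝ)+1) * (∫ r in (0:ℝ)..s, u r) ≤ L * ∫ r in (0:ℝ)..s, u r := by
        apply mul_le_mul_of_nonneg_right _ hint_nonneg
        rw [hL]
        exact mul_le_mul_of_nonneg_right (le_abs_self α) hk1pos.le
      have part2 : β * ((k:ℝ)+1) * (∑ j ∈ Finset.range k,
            ∫ r in (0:ℝ)..s, (∫ x, x ^ (j+1) ∂(μ r)) * (∫ x, x ^ (k-j) ∂(μ r)))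
          ≤ (D/ρ) * (exp (ρ*s) - 1) := by
        have hterm : ∀ j ∈ Finset.range k,
            (∫ r in (0:ℝ)..s, (∫ x, x ^ (j+1) ∂(μ r)) * (∫ x, x ^ (k-j) ∂(μ r)))
            ≤ (B^(k+1) * ((1:ℝ)/(((j:ℝ)+1)^2 * (((k-j:ℕ)):ℝ)^2))) * ((exp (ρ*s) - 1)/ρ) := by
          intro j hj
          have hjk := Finset.mem_range.mp hj
          have hihj := ih (j+1) (by omega) (by omega)
          have hihkj := ih (k-j) (by omega) (by omega)
          have hptw : ∀ r ∈ Icc (0:ℝ) s,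
              (∫ x, x ^ (j+1) ∂(μ r)) * (∫ x, x ^ (k-j) ∂(μ r))
              ≤ (B^(k+1) * ((1:ℝ)/(((j:ℝ)+1)^2 * (((k-j:ℕ)):ℝ)^2))) * exp (ρ*r) := by
            intro r hr
            have h1 := hihj r hr.1
            have h2 := hihkj r hr.1
            have hn1 : 0 ≤ ∫ x, x ^ (j+1) ∂(μ r) := mom_nonneg _ (hμsupp r hr.1) _
            have hn2 : 0 ≤ ∫ x, x ^ (k-j) ∂(μ r) := mom_nonneg _ (hμsupp r hr.1) _
            have hcast : ((k-j:ℕ):ℝ) = (k:ℝ) - (j:ℝ) := by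
              have : (0:ℕ) < k - j := by omega
              push_cast [Nat.cast_sub hjk.le]
              ring
            have hmul := mul_le_mul h1 h2 hn2 (by positivity)
            have epow : B^(j+1) * B^(k-j) = B^(k+1) := by
              rw [← pow_add]
              congr 1
              omega
            have eexp : rexp (((j+1:ℕ):ℝ) * c * r) * rexp (((k-j:ℕ):ℝ) * c * r) = rexp (ρ*r) := by
              rw [← Real.exp_add]
              congr 1
              rw [hρ, hcast]
              push_cast
              ring
            have ecast : ((j+1:ℕ):ℝ) = (j:ℝ)+1 := by push_cast; ring
            calc (∫ x, x ^ (j+1) ∂(μ r)) * (∫ x, x ^ (k-j) ∂(μ r))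
                ≤ (B^(j+1)/(((j+1:ℕ):ℝ)^2) * exp (((j+1:ℕ):ℝ) * c * r))
                  * (B^(k-j)/(((k-j:ℕ):ℝ)^2) * exp (((k-j:ℕ):ℝ) * c * r)) := hmul
              _ = (B^(j+1) * B^(k-j)) * (rexp (((j+1:ℕ):ℝ) * c * r) * rexp (((k-j:ℕ):ℝ) * c * r))
                  * ((1:ℝ)/(((j+1:ℕ):ℝ)^2 * ((k-j:ℕ):ℝ)^2)) := by ring
              _ = B^(k+1) * rexp (ρ*r) * ((1:ℝ)/(((j+1:ℕ):ℝ)^2 * ((k-j:ℕ):ℝ)^2)) := by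
                  rw [epow, eexp]
              _ = (B^(k+1) * ((1:ℝ)/(((j:ℝ)+1)^2 * (((k-j:ℕ)):ℝ)^2))) * exp (ρ*r) := by
                  rw [ecast]
                  ring
          have hcont1 : ContinuousOn
              (fun r : ℝ => (∫ x, x ^ (j+1) ∂(μ r)) * (∫ x, x ^ (k-j) ∂(μ r))) (Icc 0 s) :=
            (((hμcont (j+1)).mono Icc_subset_Ici_self).mul
              ((hμcont (k-j)).mono Icc_subset_Ici_self))
          have hcont1' : IntervalIntegrable
              (fun r : ℝ => (∫ x, x ^ (j+1) ∂(μ r)) * (∫ x, x ^ (k-j) ∂(μ r))) volume 0 s := by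
            apply ContinuousOn.intervalIntegrable
            rwa [uIcc_of_le hs]
          have hmono := intervalIntegral.integral_mono_on hs
            hcont1'
            ((Continuous.intervalIntegrable (by fun_prop) _ _))
            hptw
          calc (∫ r in (0:ℝ)..s, (∫ x, x ^ (j+1) ∂(μ r)) * (∫ x, x ^ (k-j) ∂(μ r)))
              ≤ ∫ r in (0:ℝ)..s, (B^(k+1) * ((1:ℝ)/(((j:ℝ)+1)^2 * (((k-j:ℕ)):ℝ)^2))) * exp (ρ*r) := hmono
            _ = (B^(k+1) * ((1:ℝ)/(((j:ℝ)+1)^2 * (((k-j:ℕ)):ℝ)^2))) * ((exp (ρ*s) - 1)/ρ) := by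
                rw [intervalIntegral.integral_const_mul, integral_exp_mul_self ρ s hρpos.ne']
        have hsum_le : (∑ j ∈ Finset.range k,
              ∫ r in (0:ℝ)..s, (∫ x, x ^ (j+1) ∂(μ r)) * (∫ x, x ^ (k-j) ∂(μ r)))
            ≤ (B^(k+1) * (16/((k:ℝ)+1)^2)) * ((exp (ρ*s) - 1)/ρ) := by
          have hE : 0 ≤ (exp (ρ*s) - 1)/ρ := by
            have : (1:ℝ) ≤ exp (ρ*s) := by
              rw [← exp_zero]; exact exp_le_exp.mpr (by positivity)
            apply div_nonneg (by linarith) hρpos.le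
          calc (∑ j ∈ Finset.range k,
                ∫ r in (0:ℝ)..s, (∫ x, x ^ (j+1) ∂(μ r)) * (∫ x, x ^ (k-j) ∂(μ r)))
              ≤ ∑ j ∈ Finset.range k,
                (B^(k+1) * ((1:ℝ)/(((j:ℝ)+1)^2 * (((k-j:ℕ)):ℝ)^2))) * ((exp (ρ*s) - 1)/ρ) :=
                Finset.sum_le_sum hterm
            _ = (B^(k+1) * ∑ j ∈ Finset.range k, (1:ℝ)/(((j:ℝ)+1)^2 * (((k-j:ℕ)):ℝ)^2))
                  * ((exp (ρ*s) - 1)/ρ) := by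
                rw [← Finset.sum_mul, ← Finset.mul_sum]
            _ ≤ (B^(k+1) * (16/((k:ℝ)+1)^2)) * ((exp (ρ*s) - 1)/ρ) := by
                apply mul_le_mul_of_nonneg_right _ hE
                exact mul_le_mul_of_nonneg_left (conv_sum_bound k) (by positivity)
        calc β * ((k:ℝ)+1) * (∑ j ∈ Finset.range k,
              ∫ r in (0:ℝ)..s, (∫ x, x ^ (j+1) ∂(μ r)) * (∫ x, x ^ (k-j) ∂(μ r)))
            ≤ β * ((k:ℝ)+1) * ((B^(k+1) * (16/((k:ℝ)+1)^2)) * ((exp (ρ*s) - 1)/ρ)) := by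
              apply mul_le_mul_of_nonneg_left hsum_le (by positivity)
          _ = (D/ρ) * (exp (ρ*s) - 1) := by
              rw [hD]
              field_simp
      calc u s = a^(k+1) + α * ((k:ℝ)+1) * (∫ r in (0:ℝ)..s, u r)
            + β * ((k:ℝ)+1) * (∑ j ∈ Finset.range k,
              ∫ r in (0:ℝ)..s, (∫ x, x ^ (j+1) ∂(μ r)) * (∫ x, x ^ (k-j) ∂(μ r))) := by
            rw [hu]; push_cast at hv ⊢; linarith [hv]
        _ ≤ a^(k+1) + (D/ρ) * (exp (ρ*s) - 1) + L * ∫ r in (0:ℝ)..s, u r := by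
            linarith [part1, part2]
    have hgb := gronwall_bound u (a^(k+1)) L D ρ hucont (by positivity) (by rw [hD]; positivity)
      (by rw [hL]; positivity) hLρ hgh t ht
    -- final arithmetic
    have hfinal : (a^(k+1) + D/ρ) * (ρ/(ρ-L)) ≤ B^(k+1) / (((k:ℕ)+1:ℝ)^2) := by
      have hρLγ : ρ - L = ((k:ℝ)+1) * γ := by rw [hρ, hL, hc]; ring
      have hratio : ρ/(ρ-L) = c/γ := by
        rw [hρLγ, hρ, mul_div_mul_left _ _ (by positivity)]
      have hcγ : c/γ ≤ 2 := by
        rw [hc, div_le_iff₀ hγpos]; linarith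
      have hDρ : D/ρ = 16*β*B^(k+1)/(((k:ℝ)+1)^2 * c) := by
        rw [hD, hρ]
        field_simp
      have ha1 : a^(k+1) ≤ B^(k+1)/(4:ℝ)^(k+1) := by
        calc a^(k+1) ≤ (B/4)^(k+1) := pow_le_pow_left₀ ha.le hB4 (k+1)
          _ = B^(k+1)/4^(k+1) := div_pow B 4 (k+1)
      have h4k : 4*(((k:ℕ)+1:ℝ))^2 ≤ 4^(k+1) := by
        have := four_sq_le_pow (k+1) (by omega)
        push_cast at this ⊢
        linarith
      have hterm1 : a^(k+1) * (c/γ) ≤ B^(k+1)/(2*((k:ℝ)+1)^2) := by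
        have h1 : B^(k+1)/(4:ℝ)^(k+1) ≤ B^(k+1)/(4*((k:ℝ)+1)^2) := by
          apply div_le_div_of_nonneg_left (by positivity) (by positivity) ?_
          push_cast at h4k; linarith
        have h2 : a^(k+1) * (c/γ) ≤ (B^(k+1)/(4*((k:ℝ)+1)^2)) * 2 := by
          calc a^(k+1) * (c/γ) ≤ a^(k+1) * 2 :=
                mul_le_mul_of_nonneg_left hcγ (by positivity)
            _ ≤ (B^(k+1)/(4*((k:ℝ)+1)^2)) * 2 := by
                apply mul_le_mul_of_nonneg_right (le_trans ha1 h1) (by norm_num)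
        have hq : ∀ u v : ℝ, v ≠ 0 → u/(4*v)*2 = u/(2*v) := by
          intro u v hv; field_simp; ring
        calc a^(k+1) * (c/γ) ≤ (B^(k+1)/(4*((k:ℝ)+1)^2)) * 2 := h2
          _ = B^(k+1)/(2*((k:ℝ)+1)^2) := hq _ _ (by positivity)
      have hterm2 : (D/ρ) * (c/γ) ≤ B^(k+1)/(2*((k:ℝ)+1)^2) := by
        rw [hDρ]
        have e : 16*β*B^(k+1)/(((k:ℝ)+1)^2 * c) * (c/γ) = (16*β/γ) * (B^(k+1)/((k:ℝ)+1)^2) := by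
          field_simp
        rw [e]
        have h16 : 16*β/γ ≤ 1/2 := by
          rw [div_le_iff₀ hγpos, hγ]
          have := abs_nonneg α
          linarith
        have hq2 : ∀ u v : ℝ, v ≠ 0 → (1/2)*(u/v) = u/(2*v) := by
          intro u v hv; field_simp
        calc (16*β/γ) * (B^(k+1)/((k:ℝ)+1)^2) ≤ (1/2) * (B^(k+1)/((k:ℝ)+1)^2) :=
              mul_le_mul_of_nonneg_right h16 (by positivity)
          _ = B^(k+1)/(2*((k:ℝ)+1)^2) := hq2 _ _ (by positivity)
      have : (a^(k+1) + D/ρ) * (ρ/(ρ-L)) = a^(k+1) * (c/γ) + (D/ρ) * (c/γ) := by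
        rw [hratio]; ring
      rw [this]
      push_cast
      calc a^(k+1) * (c/γ) + (D/ρ) * (c/γ)
          ≤ B^(k+1)/(2*((k:ℝ)+1)^2) + B^(k+1)/(2*((k:ℝ)+1)^2) := add_le_add hterm1 hterm2
        _ = B^(k+1)/(((k:ℝ)+1)^2) := by
            have hq : ∀ u v : ℝ, v ≠ 0 → u/(2*v) + u/(2*v) = u/v := by
              intro u v hv; field_simp; ring
            exact hq _ _ (by positivity)
    calc u t ≤ (a^(k+1) + D/ρ) * (ρ/(ρ-L)) * exp (ρ*t) := hgb
      _ ≤ B^(k+1) / (((k:ℕ)+1:ℝ)^2) * exp (ρ*t) := by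
          apply mul_le_mul_of_nonneg_right hfinal (exp_pos _).le
      _ = B^(k+1) / (((k+1:ℕ):ℝ)^2) * exp (((k+1:ℕ):ℝ) * c * t) := by
          rw [hρ]
          push_cast
          ring_nf
end


section
variable (a α β : ℝ) (μ ν : ℝ → Measure ℝ)

lemma moment_unique
    (hμcont : ∀ k : ℕ, ContinuousOn (fun t : ℝ => ∫ x, x ^ k ∂(μ t)) (Ici 0))
    (hνcont : ∀ k : ℕ, ContinuousOn (fun t : ℝ => ∫ x, x ^ k ∂(ν t)) (Ici 0))
    (hvoltμ : ∀ (k : ℕ) (t : ℝ), 0 ≤ t →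
      ∫ x, x ^ (k+1) ∂(μ t) = a ^ (k+1)
        + α * (k+1) * (∫ s in (0:ℝ)..t, ∫ x, x ^ (k+1) ∂(μ s))
        + β * (k+1) * ∑ j ∈ Finset.range k,
            ∫ s in (0:ℝ)..t, (∫ x, x ^ (j+1) ∂(μ s)) * (∫ x, x ^ (k-j) ∂(μ s)))
    (hvoltν : ∀ (k : ℕ) (t : ℝ), 0 ≤ t →
      ∫ x, x ^ (k+1) ∂(ν t) = a ^ (k+1)
        + α * (k+1) * (∫ s in (0:ℝ)..t, ∫ x, x ^ (k+1) ∂(ν s))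
        + β * (k+1) * ∑ j ∈ Finset.range k,
            ∫ s in (0:ℝ)..t, (∫ x, x ^ (j+1) ∂(ν s)) * (∫ x, x ^ (k-j) ∂(ν s))) :
    ∀ n : ℕ, 1 ≤ n → ∀ t : ℝ, 0 ≤ t → ∫ x, x ^ n ∂(μ t) = ∫ x, x ^ n ∂(ν t) := by
  intro n
  induction n using Nat.strong_induction_on with
  | _ n ih =>
    intro hn
    obtain ⟨k, rfl⟩ : ∃ k, n = k + 1 := ⟨n - 1, by omega⟩
    set e : ℝ → ℝ := fun t => (∫ x, x ^ (k+1) ∂(μ t)) - ∫ x, x ^ (k+1) ∂(ν t) with he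
    have hecont : ContinuousOn e (Ici 0) := (hμcont (k+1)).sub (hνcont (k+1))
    have heq : ∀ t : ℝ, 0 ≤ t → e t = (α * ((k:ℝ)+1)) * ∫ s in (0:ℝ)..t, e s := by
      intro t ht
      have h1 := hvoltμ k t ht
      have h2 := hvoltν k t ht
      have hbil : ∀ j ∈ Finset.range k,
          (∫ s in (0:ℝ)..t, (∫ x, x ^ (j+1) ∂(μ s)) * (∫ x, x ^ (k-j) ∂(μ s)))
          = ∫ s in (0:ℝ)..t, (∫ x, x ^ (j+1) ∂(ν s)) * (∫ x, x ^ (k-j) ∂(ν s)) := by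
        intro j hj
        have hjk := Finset.mem_range.mp hj
        apply intervalIntegral.integral_congr
        intro s hs
        rw [uIcc_of_le ht] at hs
        show (∫ x, x ^ (j+1) ∂(μ s)) * (∫ x, x ^ (k-j) ∂(μ s))
          = (∫ x, x ^ (j+1) ∂(ν s)) * (∫ x, x ^ (k-j) ∂(ν s))
        have e1 := ih (j+1) (by omega) (by omega) s hs.1
        have e2 := ih (k-j) (by omega) (by omega) s hs.1
        rw [e1, e2]
      have hsub : (∫ s in (0:ℝ)..t, ∫ x, x ^ (k+1) ∂(μ s))
            - (∫ s in (0:ℝ)..t, ∫ x, x ^ (k+1) ∂(ν s)) = ∫ s in (0:ℝ)..t, e s := by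
        rw [he, intervalIntegral.integral_sub]
        · exact (((hμcont (k+1)).mono (by rw [uIcc_of_le ht]; exact Icc_subset_Ici_self))).intervalIntegrable
        · exact (((hνcont (k+1)).mono (by rw [uIcc_of_le ht]; exact Icc_subset_Ici_self))).intervalIntegrable
      have hSig : (∑ j ∈ Finset.range k,
            ∫ s in (0:ℝ)..t, (∫ x, x ^ (j+1) ∂(μ s)) * (∫ x, x ^ (k-j) ∂(μ s)))
          = ∑ j ∈ Finset.range k,
            ∫ s in (0:ℝ)..t, (∫ x, x ^ (j+1) ∂(ν s)) * (∫ x, x ^ (k-j) ∂(ν s)) :=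
        Finset.sum_congr rfl hbil
      rw [he]
      simp only []
      rw [h1, h2, hSig, ← hsub]
      push_cast
      ring
    have := gronwall_zero e (α * ((k:ℝ)+1)) hecont heq
    intro t ht
    have := this t ht
    rw [he] at this
    simp only [] at this
    linarith
end



lemma tail_zero (P : Measure ℝ) [IsProbabilityMeasure P]
    (hint : ∀ k : ℕ, Integrable (fun x => x ^ k) P) (hsupp : P (Iic 0) = 0)
    (K : ℝ) (hK : 1 ≤ K) (hbd : ∀ n : ℕ, 1 ≤ n → ∫ x, x ^ n ∂P ≤ K ^ n) :
    P (Ioi (2*K)) = 0 := by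
  have hae : ∀ᵐ x ∂P, 0 < x := by
    rw [ae_iff]
    convert hsupp using 2
    ext x
    simp [not_lt]
  have hle : ∀ n : ℕ, 1 ≤ n → (P (Ioi (2*K))).toReal ≤ (1/2) ^ n := by
    intro n hn
    have hmarkov := mul_meas_ge_le_integral_of_nonneg
      (μ := P) (f := fun x => x ^ n)
      (by filter_upwards [hae] with x hx; positivity) (hint n) ((2*K) ^ n)
    have hmono : P (Ioi (2*K)) ≤ P {x : ℝ | (2*K) ^ n ≤ x ^ n} := by
      apply measure_mono
      intro x hx
      simp only [mem_Ioi] at hx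
      have h2K : (0:ℝ) < 2*K := by linarith
      exact pow_le_pow_left₀ h2K.le hx.le n
    have htr : (P (Ioi (2*K))).toReal ≤ (P {x : ℝ | (2*K) ^ n ≤ x ^ n}).toReal := by
      apply ENNReal.toReal_mono (measure_ne_top P _) hmono
    have h2Kpos : (0:ℝ) < (2*K) ^ n := by positivity
    have : (2*K) ^ n * (P (Ioi (2*K))).toReal ≤ K ^ n :=
      le_trans (by rw [measureReal_def]; nlinarith [htr]) (le_trans hmarkov (hbd n hn))
    have h12 : (1/2:ℝ) = K/(2*K) := by
      rw [eq_div_iff (by nlinarith : (2*K) ≠ 0)]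
      ring
    rw [show (1/2:ℝ)^n = K^n / (2*K)^n from by rw [h12, div_pow]]
    rw [le_div_iff₀ h2Kpos]
    linarith
  have hlim : Tendsto (fun n : ℕ => (1/2:ℝ) ^ n) atTop (nhds 0) := by
    apply tendsto_pow_atTop_nhds_zero_of_lt_one <;> norm_num
  have h0 : (P (Ioi (2*K))).toReal ≤ 0 := by
    apply ge_of_tendsto hlim
    filter_upwards [eventually_ge_atTop 1] with n hn
    exact hle n hn
  have := ENNReal.toReal_nonneg (a := P (Ioi (2*K)))
  have hz : (P (Ioi (2*K))).toReal = 0 := le_antisymm h0 this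
  exact (ENNReal.toReal_eq_zero_iff _).mp hz |>.resolve_right (measure_ne_top P _)

lemma conc_compl (P : Measure ℝ) (R : ℝ) (hsupp : P (Iic 0) = 0) (htail : P (Ioi R) = 0) :
    P ((Icc 0 R)ᶜ) = 0 := by
  have hsub : (Icc (0:ℝ) R)ᶜ ⊆ Iic 0 ∪ Ioi R := by
    intro x hx
    simp only [mem_compl_iff, mem_Icc, not_and_or, not_le] at hx
    rcases hx with h | h
    · exact Or.inl (le_of_lt h)
    · exact Or.inr h
  have := measure_mono (μ := P) hsub
  have hle := le_trans this (measure_union_le _ _)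
  rw [hsupp, htail] at hle
  simpa using hle

lemma measure_ext_poly (P Q : Measure ℝ) [IsProbabilityMeasure P] [IsProbabilityMeasure Q]
    (hPint : ∀ k : ℕ, Integrable (fun x => x ^ k) P)
    (hQint : ∀ k : ℕ, Integrable (fun x => x ^ k) Q)
    (R : ℝ) (hR : 0 < R) (hP : P ((Icc 0 R)ᶜ) = 0) (hQ : Q ((Icc 0 R)ᶜ) = 0)
    (hmom : ∀ k : ℕ, ∫ x, x ^ k ∂P = ∫ x, x ^ k ∂Q) : P = Q := by
  apply ext_of_forall_lintegral_eq_of_IsFiniteMeasure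
  intro f
  set g : ℝ → ℝ := fun x => (f x : ℝ) with hg
  have hgc : Continuous g := NNReal.continuous_coe.comp f.continuous
  obtain ⟨C, hC⟩ := f.bounded
  set M : ℝ := C + g 0 with hM
  have hgnn : ∀ x, 0 ≤ g x := fun x => (f x).coe_nonneg
  have hgb : ∀ x, |g x| ≤ M := by
    intro x
    rw [abs_of_nonneg (hgnn x)]
    have := hC x 0
    have hd : dist (f x) (f 0) = |g x - g 0| := NNReal.dist_eq _ _
    rw [hd] at this
    have := abs_le.mp this
    rw [hM]
    linarith [this.2, hgnn 0]
  have hgP : Integrable g P :=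
    Integrable.mono' (integrable_const M) hgc.aestronglyMeasurable
      (Filter.Eventually.of_forall hgb)
  have hgQ : Integrable g Q :=
    Integrable.mono' (integrable_const M) hgc.aestronglyMeasurable
      (Filter.Eventually.of_forall hgb)
  -- polynomial integrals agree
  have hpoly : ∀ p : Polynomial ℝ, ∫ x, p.eval x ∂P = ∫ x, p.eval x ∂Q := by
    intro p
    have hrw : (fun x : ℝ => p.eval x)
        = fun x : ℝ => ∑ i ∈ Finset.range (p.natDegree + 1), p.coeff i * x ^ i := by
      funext x
      exact p.eval_eq_sum_range x
    rw [hrw, integral_finset_sum _ (fun i _ => (hPint i).const_mul _),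
      integral_finset_sum _ (fun i _ => (hQint i).const_mul _)]
    refine Finset.sum_congr rfl fun i _ => ?_
    rw [MeasureTheory.integral_const_mul, MeasureTheory.integral_const_mul, hmom i]
  have hpint : ∀ p : Polynomial ℝ, Integrable (fun x => p.eval x) P ∧
      Integrable (fun x => p.eval x) Q := by
    intro p
    have hrw : (fun x : ℝ => p.eval x)
        = fun x : ℝ => ∑ i ∈ Finset.range (p.natDegree + 1), p.coeff i * x ^ i := by
      funext x
      exact p.eval_eq_sum_range x
    rw [hrw]
    exact ⟨integrable_finset_sum _ (fun i _ => (hPint i).const_mul _),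
      integrable_finset_sum _ (fun i _ => (hQint i).const_mul _)⟩
  -- approximation step
  have key : ∫ x, g x ∂P = ∫ x, g x ∂Q := by
    have hstep : ∀ ε : ℝ, 0 < ε → |(∫ x, g x ∂P) - ∫ x, g x ∂Q| ≤ 2*ε := by
      intro ε hε
      obtain ⟨p, hp⟩ := exists_polynomial_near_of_continuousOn 0 R g
        hgc.continuousOn ε hε
      have hclose : ∀ (μ' : Measure ℝ), IsProbabilityMeasure μ' → μ' ((Icc 0 R)ᶜ) = 0 →
          Integrable (fun x => p.eval x) μ' → Integrable g μ' →
          |(∫ x, g x ∂μ') - ∫ x, p.eval x ∂μ'| ≤ ε := by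
        intro μ' hprob hnull hip hig
        rw [← MeasureTheory.integral_sub hig hip]
        have habs : |∫ x, (g x - p.eval x) ∂μ'| ≤ ∫ x, |g x - p.eval x| ∂μ' := by
          simpa using norm_integral_le_integral_norm (μ := μ') (f := fun x => g x - p.eval x)
        refine le_trans habs ?_
        have hae' : ∀ᵐ x ∂μ', x ∈ Icc 0 R := by
          rw [ae_iff]
          exact hnull
        have hb : ∀ᵐ x ∂μ', |g x - p.eval x| ≤ ε := by
          filter_upwards [hae'] with x hx
          have := hp x hx
          rw [abs_sub_comm]
          linarith [le_of_lt this]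
        calc (∫ x, |g x - p.eval x| ∂μ') ≤ ∫ _x, ε ∂μ' :=
              integral_mono_ae (hig.sub hip).abs (integrable_const ε) hb
          _ = ε := by simp [measure_univ]
      have h1 := hclose P inferInstance hP (hpint p).1 hgP
      have h2 := hclose Q inferInstance hQ (hpint p).2 hgQ
      have h3 := hpoly p
      calc |(∫ x, g x ∂P) - ∫ x, g x ∂Q|
          ≤ |(∫ x, g x ∂P) - ∫ x, p.eval x ∂P| + |(∫ x, p.eval x ∂Q) - ∫ x, g x ∂Q| := by
            rw [h3]
            have := abs_sub_abs_le_abs_sub ((∫ x, g x ∂P)) ((∫ x, g x ∂Q))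
            calc |(∫ x, g x ∂P) - ∫ x, g x ∂Q|
                = |((∫ x, g x ∂P) - ∫ x, p.eval x ∂Q) + ((∫ x, p.eval x ∂Q) - ∫ x, g x ∂Q)| := by
                  congr 1; ring
              _ ≤ |(∫ x, g x ∂P) - ∫ x, p.eval x ∂Q| + |(∫ x, p.eval x ∂Q) - ∫ x, g x ∂Q| :=
                  abs_add_le _ _
          _ ≤ 2*ε := by
            rw [abs_sub_comm] at h2
            linarith
    by_contra hne
    have hpos : 0 < |(∫ x, g x ∂P) - ∫ x, g x ∂Q| := by
      apply abs_pos.mpr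
      intro hzero
      exact hne (by linarith)
    have := hstep (|(∫ x, g x ∂P) - ∫ x, g x ∂Q|/4) (by linarith)
    linarith
  rw [lintegral_coe_eq_integral f hgP, lintegral_coe_eq_integral f hgQ, key]



theorem stmt12 (a α : ℝ) (ha : 0 < a) (β : ℝ) (hβ : β = 1 ∨ β = 2)
    (μ ν : ℝ → Measure ℝ)
    (hμprob : ∀ t, IsProbabilityMeasure (μ t)) (hνprob : ∀ t, IsProbabilityMeasure (ν t))
    -- supported in `(0,∞)`
    (hμsupp : ∀ t : ℝ, 0 ≤ t → μ t (Iic 0) = 0)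
    (hνsupp : ∀ t : ℝ, 0 ≤ t → ν t (Iic 0) = 0)
    -- all moments finite and continuous in time
    (hμint : ∀ t : ℝ, 0 ≤ t → ∀ k : ℕ, Integrable (fun x => x ^ k) (μ t))
    (hνint : ∀ t : ℝ, 0 ≤ t → ∀ k : ℕ, Integrable (fun x => x ^ k) (ν t))
    (hμcont : ∀ k : ℕ, ContinuousOn (fun t : ℝ => ∫ x, x ^ k ∂(μ t)) (Ici 0))
    (hνcont : ∀ k : ℕ, ContinuousOn (fun t : ℝ => ∫ x, x ^ k ∂(ν t)) (Ici 0))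
    -- initial condition δ_a
    (hμ0 : μ 0 = Measure.dirac a) (hν0 : ν 0 = Measure.dirac a)
    -- the geometric-Brownian-motion limiting equation
    (heqμ : ∀ f : ℝ → ℝ, PolyGrowthC2 f → ∀ t : ℝ, 0 ≤ t →
      ∫ x, f x ∂(μ t) = f a
        + α * (∫ s in (0:ℝ)..t, ∫ x, x * deriv f x ∂(μ s))
        + β * ∫ s in (0:ℝ)..t, ∫ x, ∫ y, deltaF f x y * (x * y) ∂(μ s) ∂(μ s))
    (heqν : ∀ f : ℝ → ℝ, PolyGrowthC2 f → ∀ t : ℝ, 0 ≤ t →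
      ∫ x, f x ∂(ν t) = f a
        + α * (∫ s in (0:ℝ)..t, ∫ x, x * deriv f x ∂(ν s))
        + β * ∫ s in (0:ℝ)..t, ∫ x, ∫ y, deltaF f x y * (x * y) ∂(ν s) ∂(ν s)) :
    ∀ t : ℝ, 0 ≤ t → μ t = ν t := by
  intro t ht
  haveI := hμprob t
  haveI := hνprob t
  have hb : 0 < β := by rcases hβ with h | h <;> rw [h] <;> norm_num
  have hvoltμ := fun k s hs => moment_volterra a α β μ hμint hμcont heqμ k s hs
  have hvoltν := fun k s hs => moment_volterra a α β ν hνint hνcont heqν k s hs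
  -- all moments coincide
  have hmom : ∀ n : ℕ, ∫ x, x ^ n ∂(μ t) = ∫ x, x ^ n ∂(ν t) := by
    intro n
    rcases Nat.eq_zero_or_pos n with rfl | hn
    · simp
    · exact moment_unique a α β μ ν hμcont hνcont hvoltμ hvoltν n hn t ht
  -- uniform moment growth bound
  have hbdμ := moment_bound a α β μ ha hb hμsupp hμint hμcont hvoltμ
  have hbdν := moment_bound a α β ν ha hb hνsupp hνint hνcont hvoltν
  set B : ℝ := 4 * max a 1 with hB
  set c : ℝ := |α| + (32*β + |α| + 1) with hc
  set K : ℝ := B * exp (c * t) with hK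
  have hcpos : 0 < c := by rw [hc]; positivity
  have hBle : 4 ≤ B := by rw [hB]; have := le_max_right a 1; linarith
  have hexp1 : 1 ≤ exp (c * t) := by
    rw [← exp_zero]
    exact exp_le_exp.mpr (by positivity)
  have hK1 : 1 ≤ K := by
    rw [hK]
    nlinarith
  have hbd' : ∀ (P : ℝ → Measure ℝ),
      (∀ n : ℕ, 1 ≤ n → ∀ s : ℝ, 0 ≤ s → ∫ x, x ^ n ∂(P s)
        ≤ ((4*max a 1) ^ n / ((n:ℝ)^2)) * exp ((n:ℝ) * (|α| + (32*β + |α| + 1)) * s)) →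
      ∀ n : ℕ, 1 ≤ n → ∫ x, x ^ n ∂(P t) ≤ K ^ n := by
    intro P hbd n hn
    have h1 := hbd n hn t ht
    have hn2 : (1:ℝ) ≤ ((n:ℝ))^2 := by
      have : (1:ℝ) ≤ (n:ℝ) := by exact_mod_cast hn
      nlinarith
    have h2 : ((4*max a 1) ^ n / ((n:ℝ)^2)) ≤ B ^ n := by
      rw [hB]
      apply div_le_self (by positivity) hn2
    have h3 : exp ((n:ℝ) * (|α| + (32*β + |α| + 1)) * t) = (exp (c*t)) ^ n := by
      rw [hc, ← Real.exp_nat_mul]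
      congr 1
      ring
    calc ∫ x, x ^ n ∂(P t) ≤ ((4*max a 1) ^ n / ((n:ℝ)^2)) * exp ((n:ℝ) * (|α| + (32*β + |α| + 1)) * t) := h1
      _ ≤ B ^ n * (exp (c*t)) ^ n := by
          rw [h3]
          exact mul_le_mul_of_nonneg_right h2 (by positivity)
      _ = K ^ n := by rw [hK, mul_pow B (exp (c*t)) n]
  have htailμ := tail_zero (μ t) (hμint t ht) (hμsupp t ht) K hK1 (hbd' μ hbdμ)
  have htailν := tail_zero (ν t) (hνint t ht) (hνsupp t ht) K hK1 (hbd' ν hbdν)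
  have hconcμ := conc_compl (μ t) (2*K) (hμsupp t ht) htailμ
  have hconcν := conc_compl (ν t) (2*K) (hνsupp t ht) htailν
  exact measure_ext_poly (μ t) (ν t) (hμint t ht) (hνint t ht) (2*K)
    (by linarith) hconcμ hconcν hmom
end

section
/- Let a > 0, α ∈ ℝ, β > 0, and let (w_k)_{k≥1} be the unique sequence of real polynomials determined by w_k(0) = 1 and w_k'(x) = k ∑_{i=0}^{k−2} w_{i+1}(x) w_{k−1−i}(x) for every k ≥ 1 (the sum being empty, hence zero, for k = 1). Suppose m_k : [0,∞) → ℝ, k = 0,1,2,…, are differentiable functions with m_0(t) = 1 for all t, m_k(0) = a^k, and m_k'(t) = α k m_k(t) + β k ∑_{i=0}^{k−2} m_{i+1}(t) m_{k−1−i}(t) for every k ≥ 1 and t ≥ 0. Then m_k(t) = a^k · w_k(βt) · e^{kαt} for every k ≥ 1 and t ≥ 0. -/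
open Polynomial

theorem stmt13 (a α β : ℝ) (ha : 0 < a) (hβ : 0 < β)
    -- the moment polynomials of the geometric matrix Brownian motion
    (w : ℕ → Polynomial ℝ)
    (hw0 : ∀ k : ℕ, 1 ≤ k → (w k).eval 0 = 1)
    (hwder : ∀ k : ℕ, 1 ≤ k → Polynomial.derivative (w k) =
      Polynomial.C (k : ℝ) * ∑ i ∈ Finset.range (k - 1), w (i + 1) * w (k - 1 - i))
    -- the moment functions and their ODE system
    (m : ℕ → ℝ → ℝ)
    (h0 : ∀ t : ℝ, m 0 t = 1)
    (hinit : ∀ k : ℕ, 1 ≤ k → m k 0 = a ^ k)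
    (hode : ∀ k : ℕ, 1 ≤ k → ∀ t : ℝ, 0 ≤ t →
      HasDerivAt (m k)
        (α * k * m k t
          + β * k * ∑ i ∈ Finset.range (k - 1), m (i + 1) t * m (k - 1 - i) t) t) :
    ∀ k : ℕ, 1 ≤ k → ∀ t : ℝ, 0 ≤ t →
      m k t = a ^ k * (w k).eval (β * t) * Real.exp (k * α * t) := by
  intro k
  induction k using Nat.strong_induction_on with
  | _ k IH =>
    intro hk t ht
    -- the candidate solution
    set g : ℝ → ℝ := fun s => a ^ k * (w k).eval (β * s) * Real.exp (k * α * s) with hg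
    -- derivative of g
    have hgd : ∀ s : ℝ, HasDerivAt g
        ((derivative (w k)).eval (β * s) * β * a ^ k * Real.exp (k * α * s)
          + a ^ k * (w k).eval (β * s) * (Real.exp (k * α * s) * (k * α))) s := by
      intro s
      have hlin : HasDerivAt (fun u : ℝ => β * u) β s := by
        simpa using (hasDerivAt_id s).const_mul β
      have h1 : HasDerivAt (fun u : ℝ => (w k).eval (β * u))
          ((derivative (w k)).eval (β * s) * β) s :=
        ((w k).hasDerivAt (β * s)).comp s hlin
      have hlin2 : HasDerivAt (fun u : ℝ => (k : ℝ) * α * u) ((k : ℝ) * α) s := by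
        simpa using (hasDerivAt_id s).const_mul ((k : ℝ) * α)
      have h2 : HasDerivAt (fun u : ℝ => Real.exp ((k : ℝ) * α * u))
          (Real.exp ((k : ℝ) * α * s) * ((k : ℝ) * α)) s :=
        (Real.hasDerivAt_exp ((k : ℝ) * α * s)).comp s hlin2
      have := ((h1.const_mul (a ^ k)).fun_mul h2)
      simpa [hg, mul_comm, mul_left_comm, mul_assoc] using this
    -- g satisfies the same ODE on [0, ∞)
    have hkey : ∀ s : ℝ, 0 ≤ s → HasDerivAt g
        (α * k * g s
          + β * k * ∑ i ∈ Finset.range (k - 1), m (i + 1) s * m (k - 1 - i) s) s := by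
      intro s hs
      have hsum : ∀ i ∈ Finset.range (k - 1),
          m (i + 1) s * m (k - 1 - i) s
            = a ^ k * ((w (i + 1)).eval (β * s) * (w (k - 1 - i)).eval (β * s))
              * Real.exp (k * α * s) := by
        intro i hi
        have hi' : i < k - 1 := Finset.mem_range.mp hi
        have e1 : m (i + 1) s
            = a ^ (i + 1) * (w (i + 1)).eval (β * s) * Real.exp ((i + 1 : ℕ) * α * s) :=
          IH (i + 1) (by omega) (by omega) s hs
        have e2 : m (k - 1 - i) s
            = a ^ (k - 1 - i) * (w (k - 1 - i)).eval (β * s)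
              * Real.exp ((k - 1 - i : ℕ) * α * s) :=
          IH (k - 1 - i) (by omega) (by omega) s hs
        have hadd : (i + 1) + (k - 1 - i) = k := by omega
        rw [e1, e2]
        have hexp : Real.exp ((i + 1 : ℕ) * α * s) * Real.exp ((k - 1 - i : ℕ) * α * s)
            = Real.exp ((k : ℝ) * α * s) := by
          rw [← Real.exp_add]
          congr 1
          have : ((i + 1 : ℕ) : ℝ) + ((k - 1 - i : ℕ) : ℝ) = (k : ℝ) := by
            rw [← Nat.cast_add, hadd]
          linear_combination α * s * this
        have hpow : a ^ (i + 1) * a ^ (k - 1 - i) = a ^ k := by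
          rw [← pow_add, hadd]
        calc a ^ (i + 1) * (w (i + 1)).eval (β * s) * Real.exp ((i + 1 : ℕ) * α * s)
              * (a ^ (k - 1 - i) * (w (k - 1 - i)).eval (β * s)
                * Real.exp ((k - 1 - i : ℕ) * α * s))
            = (a ^ (i + 1) * a ^ (k - 1 - i))
                * ((w (i + 1)).eval (β * s) * (w (k - 1 - i)).eval (β * s))
                * (Real.exp ((i + 1 : ℕ) * α * s) * Real.exp ((k - 1 - i : ℕ) * α * s)) := by
              ring
          _ = a ^ k * ((w (i + 1)).eval (β * s) * (w (k - 1 - i)).eval (β * s))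
                * Real.exp ((k : ℝ) * α * s) := by rw [hpow, hexp]
      have hder : (derivative (w k)).eval (β * s)
          = (k : ℝ) * ∑ i ∈ Finset.range (k - 1),
              (w (i + 1)).eval (β * s) * (w (k - 1 - i)).eval (β * s) := by
        rw [hwder k hk]
        simp [eval_finset_sum]
      have heq : (derivative (w k)).eval (β * s) * β * a ^ k * Real.exp (k * α * s)
            + a ^ k * (w k).eval (β * s) * (Real.exp (k * α * s) * (k * α))
          = α * k * g s
            + β * k * ∑ i ∈ Finset.range (k - 1), m (i + 1) s * m (k - 1 - i) s := by
        rw [Finset.sum_congr rfl hsum, hder, hg, ← Finset.sum_mul, ← Finset.mul_sum]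
        ring
      exact heq ▸ hgd s
    -- the difference times a decaying exponential is constant
    set h : ℝ → ℝ := fun s => (m k s - g s) * Real.exp (-(α * k) * s) with hh
    have hhd : ∀ s : ℝ, 0 ≤ s → HasDerivAt h 0 s := by
      intro s hs
      have hd : HasDerivAt (fun u => m k u - g u)
          (α * k * (m k s - g s)) s := by
        have := (hode k hk s hs).fun_sub (hkey s hs)
        simpa [mul_sub] using this
      have hlin3 : HasDerivAt (fun u : ℝ => -(α * (k : ℝ)) * u) (-(α * (k : ℝ))) s := by
        simpa using (hasDerivAt_id s).const_mul (-(α * (k : ℝ)))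
      have hexp3 : HasDerivAt (fun u : ℝ => Real.exp (-(α * (k : ℝ)) * u))
          (Real.exp (-(α * (k : ℝ)) * s) * (-(α * (k : ℝ)))) s :=
        (Real.hasDerivAt_exp _).comp s hlin3
      have H := hd.mul hexp3
      have hz : α * ↑k * (m k s - g s) * Real.exp (-(α * ↑k) * s)
          + (m k s - g s) * (Real.exp (-(α * ↑k) * s) * -(α * ↑k)) = 0 := by ring
      rw [hz] at H
      exact H
    have hcont : ContinuousOn h (Set.Icc 0 t) := by
      intro s hs
      exact ((hhd s hs.1).continuousAt).continuousWithinAt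
    have hconst := constant_of_has_deriv_right_zero hcont
      (fun x hx => ((hhd x hx.1).hasDerivWithinAt))
    have ht0 : h t = h 0 := hconst t ⟨ht, le_refl t⟩
    have hh0 : h 0 = 0 := by
      simp [hh, hg, hinit k hk, hw0 k hk]
    have hexpne : Real.exp (-(α * (k : ℝ)) * t) ≠ 0 := Real.exp_ne_zero _
    have : (m k t - g t) = 0 := by
      have := ht0.trans hh0
      rw [hh] at this
      exact (mul_eq_zero.mp this).resolve_right hexpne
    have := sub_eq_zero.mp this
    simpa [hg] using this
end

section
/- Let (w_k)_{k≥1} be the unique sequence of real polynomials determined by w_k(0) = 1 and w_k'(x) = k ∑_{i=0}^{k−2} w_{i+1}(x) w_{k−1−i}(x) for every k ≥ 1 (the sum being empty, hence zero, for k = 1). Then for every integer k ≥ 1 and every x ≥ 0, w_k(x) ≤ k! · 9^{k−1} · (1+x)^{k−1}. -/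
open Polynomial

lemma le_choose_aux : ∀ k j : ℕ, 1 ≤ j → j < k → k ≤ k.choose j := by
  intro k
  induction k with
  | zero => intro j h1 h2; omega
  | succ n ih =>
    intro j h1 h2
    match j, h1 with
    | j' + 1, _ =>
      rw [Nat.choose_succ_succ]
      simp only [Nat.succ_eq_add_one]
      by_cases hn : j' + 1 = n
      · have hj' : j' ≤ n := by omega
        have h3 : n.choose j' = n := by
          rw [← Nat.choose_symm hj']
          have : n - j' = 1 := by omega
          rw [this, Nat.choose_one_right]
        have h4 : n.choose (j' + 1) = 1 := by
          rw [hn, Nat.choose_self]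
        omega
      · by_cases hj : j' = 0
        · subst hj
          simp only [Nat.succ_eq_add_one, Nat.zero_add, Nat.choose_one_right,
            Nat.choose_zero_right]
          omega
        · have h3 := ih (j' + 1) (by omega) (by omega)
          have h4 := Nat.choose_pos (show j' ≤ n by omega)
          omega

lemma fact_mul_fact_le (k j : ℕ) (h1 : 1 ≤ j) (h2 : j < k) :
    j.factorial * (k - j).factorial ≤ (k - 1).factorial := by
  obtain ⟨m, rfl⟩ : ∃ m, k = m + 1 := ⟨k - 1, by omega⟩
  have hc := Nat.choose_mul_factorial_mul_factorial (Nat.le_of_lt h2)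
  have hk := le_choose_aux (m + 1) j h1 h2
  have h3 : (m + 1) * (j.factorial * ((m + 1) - j).factorial) ≤ (m + 1).factorial := by
    calc (m + 1) * (j.factorial * ((m + 1) - j).factorial)
        ≤ (m + 1).choose j * (j.factorial * ((m + 1) - j).factorial) :=
          Nat.mul_le_mul_right _ hk
      _ = (m + 1).choose j * j.factorial * ((m + 1) - j).factorial := (mul_assoc _ _ _).symm
      _ = (m + 1).factorial := hc
  rw [Nat.factorial_succ] at h3
  have h4 := Nat.le_of_mul_le_mul_left h3 (by omega)
  simpa using h4

lemma poly_monotoneOn (p : Polynomial ℝ)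
    (h : ∀ y : ℝ, 0 ≤ y → 0 ≤ (derivative p).eval y) :
    MonotoneOn (fun x => p.eval x) (Set.Ici (0 : ℝ)) := by
  apply monotoneOn_of_deriv_nonneg (convex_Ici 0) p.continuous.continuousOn
    p.differentiable.differentiableOn
  intro x hx
  rw [Polynomial.deriv]
  rw [interior_Ici] at hx
  exact h x (le_of_lt hx)

theorem stmt14
    (w : ℕ → Polynomial ℝ)
    (hw0 : ∀ k : ℕ, 1 ≤ k → (w k).eval 0 = 1)
    (hwder : ∀ k : ℕ, 1 ≤ k → Polynomial.derivative (w k) =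
      Polynomial.C (k : ℝ) * ∑ i ∈ Finset.range (k - 1), w (i + 1) * w (k - 1 - i)) :
    ∀ k : ℕ, 1 ≤ k → ∀ x : ℝ, 0 ≤ x →
      (w k).eval x ≤ (k.factorial : ℝ) * 9 ^ (k - 1) * (1 + x) ^ (k - 1) := by
  suffices H : ∀ k : ℕ, 1 ≤ k → ∀ x : ℝ, 0 ≤ x →
      1 ≤ (w k).eval x ∧
        (w k).eval x ≤ (k.factorial : ℝ) * 9 ^ (k - 1) * (1 + x) ^ (k - 1) by
    intro k hk x hx
    exact (H k hk x hx).2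
  intro k
  induction k using Nat.strong_induction_on with
  | _ k IH =>
    intro hk x hx
    have hdnn : ∀ y : ℝ, 0 ≤ y → 0 ≤ (derivative (w k)).eval y := by
      intro y hy
      rw [hwder k hk]
      simp only [eval_mul, eval_C, eval_finset_sum]
      apply mul_nonneg (by positivity)
      apply Finset.sum_nonneg
      intro i hi
      simp only [Finset.mem_range] at hi
      have h1 := IH (i + 1) (by omega) (by omega) y hy
      have h2 := IH (k - 1 - i) (by omega) (by omega) y hy
      exact mul_nonneg (le_trans zero_le_one h1.1) (le_trans zero_le_one h2.1)
    have hmono := poly_monotoneOn (w k) hdnn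
    have hlow : 1 ≤ (w k).eval x := by
      have := hmono Set.self_mem_Ici (Set.mem_Ici.mpr hx) hx
      simp only at this
      rwa [hw0 k hk] at this
    refine ⟨hlow, ?_⟩
    rcases eq_or_lt_of_le hk with hk1 | hk2
    · -- k = 1
      subst hk1
      have hd0 : derivative (w 1) = 0 := by
        rw [hwder 1 le_rfl]; simp
      obtain hc := Polynomial.eq_C_of_natDegree_eq_zero
        (Polynomial.natDegree_eq_zero_of_derivative_eq_zero hd0)
      have h0 := hw0 1 le_rfl
      rw [hc] at h0 ⊢
      simp only [eval_C] at h0 ⊢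
      simp [h0, Nat.factorial]
    · -- k ≥ 2
      set m := k - 1 with hm
      have hm1 : 1 ≤ m := by omega
      set M : ℝ := (k.factorial : ℝ) * 9 ^ m with hM
      have hfac1 : (1 : ℝ) ≤ (k.factorial : ℝ) := by
        exact_mod_cast Nat.one_le_iff_ne_zero.mpr (Nat.factorial_ne_zero k)
      have h9m : (1 : ℝ) ≤ 9 ^ m := one_le_pow₀ (by norm_num)
      have hM1 : 1 ≤ M := by nlinarith
      have hdb : ∀ y : ℝ, 0 ≤ y →
          (derivative (w k)).eval y ≤ M * ((m : ℝ) * (1 + y) ^ (m - 1)) := by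
        intro y hy
        have hy1 : (0 : ℝ) ≤ 1 + y := by linarith
        rw [hwder k hk]
        simp only [eval_mul, eval_C, eval_finset_sum]
        have hterm : ∀ i ∈ Finset.range (k - 1),
            (w (i + 1)).eval y * (w (k - 1 - i)).eval y ≤
              ((k - 1).factorial : ℝ) * 9 ^ (k - 2) * (1 + y) ^ (k - 2) := by
          intro i hi
          simp only [Finset.mem_range] at hi
          have h1 := IH (i + 1) (by omega) (by omega) y hy
          have h2 := IH (k - 1 - i) (by omega) (by omega) y hy
          have hb1 : (w (i + 1)).eval y ≤ ((i + 1).factorial : ℝ) * 9 ^ i * (1 + y) ^ i := by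
            simpa using h1.2
          have hb2 : (w (k - 1 - i)).eval y ≤
              ((k - 1 - i).factorial : ℝ) * 9 ^ (k - 2 - i) * (1 + y) ^ (k - 2 - i) := by
            have he : k - 1 - i - 1 = k - 2 - i := by omega
            have := h2.2
            rwa [he] at this
          have hmul := mul_le_mul hb1 hb2 (le_trans zero_le_one h2.1) (by positivity)
          refine le_trans hmul ?_
          have hfac : ((i + 1).factorial * (k - 1 - i).factorial : ℝ) ≤
              ((k - 1).factorial : ℝ) := by
            have := fact_mul_fact_le k (i + 1) (by omega) (by omega)
            have he : k - (i + 1) = k - 1 - i := by omega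
            rw [he] at this
            exact_mod_cast this
          have h9 : (9 : ℝ) ^ i * 9 ^ (k - 2 - i) = 9 ^ (k - 2) := by
            rw [← pow_add]; congr 1; omega
          have hx9 : (1 + y) ^ i * (1 + y) ^ (k - 2 - i) = (1 + y) ^ (k - 2) := by
            rw [← pow_add]; congr 1; omega
          calc ((i + 1).factorial : ℝ) * 9 ^ i * (1 + y) ^ i *
                (((k - 1 - i).factorial : ℝ) * 9 ^ (k - 2 - i) * (1 + y) ^ (k - 2 - i))
              = ((i + 1).factorial * (k - 1 - i).factorial : ℝ) *
                  (9 ^ i * 9 ^ (k - 2 - i)) * ((1 + y) ^ i * (1 + y) ^ (k - 2 - i)) := by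
                ring
            _ = ((i + 1).factorial * (k - 1 - i).factorial : ℝ) * 9 ^ (k - 2) *
                  (1 + y) ^ (k - 2) := by rw [h9, hx9]
            _ ≤ ((k - 1).factorial : ℝ) * 9 ^ (k - 2) * (1 + y) ^ (k - 2) := by
                apply mul_le_mul_of_nonneg_right _ (by positivity)
                exact mul_le_mul_of_nonneg_right hfac (by positivity)
        have hsum := Finset.sum_le_card_nsmul (Finset.range (k - 1))
          (fun i => (w (i + 1)).eval y * (w (k - 1 - i)).eval y) _ hterm
        rw [Finset.card_range, nsmul_eq_mul] at hsum
        have hknn : (0 : ℝ) ≤ (k : ℝ) := by positivity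
        have step1 : (k : ℝ) * ∑ i ∈ Finset.range (k - 1),
            (w (i + 1)).eval y * (w (k - 1 - i)).eval y ≤
            (k : ℝ) * (((k - 1 : ℕ) : ℝ) *
              (((k - 1).factorial : ℝ) * 9 ^ (k - 2) * (1 + y) ^ (k - 2))) :=
          mul_le_mul_of_nonneg_left hsum hknn
        refine le_trans step1 ?_
        have hkfac : (k : ℝ) * ((k - 1).factorial : ℝ) = (k.factorial : ℝ) := by
          exact_mod_cast Nat.mul_factorial_pred (by omega)
        have h9le : (9 : ℝ) ^ (k - 2) ≤ 9 ^ m := by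
          apply pow_le_pow_right₀ (by norm_num)
          omega
        have hmm : m - 1 = k - 2 := by omega
        rw [hM, hmm]
        have ht : (0 : ℝ) ≤ (1 + y) ^ (k - 2) := by positivity
        have hBnn : (0 : ℝ) ≤ ((k - 1 : ℕ) : ℝ) := by positivity
        have heq : (k : ℝ) * (((k - 1 : ℕ) : ℝ) *
            (((k - 1).factorial : ℝ) * 9 ^ (k - 2) * (1 + y) ^ (k - 2)))
            = (k.factorial : ℝ) * 9 ^ (k - 2) * (((k - 1 : ℕ) : ℝ) * (1 + y) ^ (k - 2)) := by
          rw [← hkfac]; ring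
        rw [heq]
        have hmcast : ((m : ℕ) : ℝ) = ((k - 1 : ℕ) : ℝ) := by rw [hm]
        calc (k.factorial : ℝ) * 9 ^ (k - 2) * (((k - 1 : ℕ) : ℝ) * (1 + y) ^ (k - 2))
            ≤ (k.factorial : ℝ) * 9 ^ m * (((k - 1 : ℕ) : ℝ) * (1 + y) ^ (k - 2)) := by
              apply mul_le_mul_of_nonneg_right _ (by positivity)
              exact mul_le_mul_of_nonneg_left h9le (by positivity)
          _ = (k.factorial : ℝ) * 9 ^ m * (((m : ℕ) : ℝ) * (1 + y) ^ (k - 2)) := by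
              rw [hmcast]
      -- consider q = C M * (1+X)^m - w k
      have hq : ∀ y : ℝ, 0 ≤ y →
          0 ≤ (derivative (C M * (1 + X) ^ m - w k)).eval y := by
        intro y hy
        have hdb' := hdb y hy
        rw [derivative_sub, derivative_mul, derivative_C, derivative_pow]
        simp only [zero_mul, zero_add, derivative_add, derivative_one, derivative_X,
          eval_sub, eval_mul, eval_add, eval_pow, eval_C, eval_one, eval_X,
          eval_natCast, mul_one]
        have : M * ((m : ℝ) * (1 + y) ^ (m - 1)) =
            M * ((m : ℝ) * (1 + y) ^ (m - 1) * 1) := by ring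
        linarith [hdb']
      have hmq := poly_monotoneOn _ hq
      have h0q := hmq Set.self_mem_Ici (Set.mem_Ici.mpr hx) hx
      simp only [eval_sub, eval_mul, eval_pow, eval_add, eval_C, eval_one, eval_X] at h0q
      rw [hw0 k hk] at h0q
      have h10 : (1 + (0 : ℝ)) ^ m = 1 := by norm_num
      rw [h10] at h0q
      -- h0q : M * 1 - 1 ≤ M * (1 + x) ^ m - (w k).eval x
      linarith
end

section
/- For every natural number n, ∑_{i=0}^{n} 1/C(n,i) ≤ 3, where C(n,i) denotes the binomial coefficient (n choose i). -/
lemma aux_le_choose {n i : ℕ} (h0 : 0 < i) (h1 : i < n) : n ≤ Nat.choose n i := by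
  obtain ⟨m, rfl⟩ : ∃ m, n = m + 1 := ⟨n - 1, by omega⟩
  obtain ⟨k, rfl⟩ : ∃ k, i = k + 1 := ⟨i - 1, by omega⟩
  have key : (m + 1) * Nat.choose m k = Nat.choose (m + 1) (k + 1) * (k + 1) :=
    Nat.add_one_mul_choose_eq m k
  have hck : k + 1 ≤ Nat.choose m k := by
    calc k + 1 = Nat.choose (k + 1) k := (Nat.choose_succ_self_right k).symm
    _ ≤ Nat.choose m k := Nat.choose_le_choose k (by omega)
  nlinarith [Nat.choose_pos (show k + 1 ≤ m + 1 by omega)]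

theorem stmt16 (n : ℕ) :
    ∑ i ∈ Finset.range (n + 1), (1 : ℝ) / (Nat.choose n i : ℝ) ≤ 3 := by
  rcases Nat.eq_zero_or_pos n with rfl | hn
  · norm_num
  have hnR : (0:ℝ) < n := by exact_mod_cast hn
  have hbound : ∀ i ∈ Finset.range (n + 1),
      (1 : ℝ) / (Nat.choose n i : ℝ) ≤
      1 / n + (if i = 0 then (1 - 1/n : ℝ) else 0) + (if i = n then (1 - 1/n : ℝ) else 0) := by
    intro i hi
    simp only [Finset.mem_range] at hi
    rcases eq_or_ne i 0 with rfl | h0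
    · have hne : (0:ℕ) ≠ n := by omega
      simp [hne]
    rcases eq_or_ne i n with rfl | hne
    · simp [h0]
    · have hlt : i < n := by omega
      have hle : n ≤ Nat.choose n i := aux_le_choose (by omega) hlt
      have : (n:ℝ) ≤ (Nat.choose n i : ℝ) := by exact_mod_cast hle
      simp only [h0, hne, if_false, add_zero]
      simpa using one_div_le_one_div_of_le hnR this
  have := Finset.sum_le_sum hbound
  refine this.trans ?_
  rw [Finset.sum_add_distrib, Finset.sum_add_distrib, Finset.sum_const,
    Finset.sum_ite_eq' (Finset.range (n+1)) 0, Finset.sum_ite_eq' (Finset.range (n+1)) n]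
  simp only [Finset.mem_range, Nat.lt_add_one, if_true, Nat.zero_lt_succ,
    Finset.card_range, nsmul_eq_mul]
  have : ((n:ℝ) + 1) * (1 / n) + (1 - 1/n) + (1 - 1/n) = 3 - 1/n := by
    field_simp
    ring
  push_cast
  rw [this]
  have h1n : (0:ℝ) < 1/n := by positivity
  linarith
end
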